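/- Let Γ be the Cartan grading on the Cayley algebra C over an algebraically closed field. Then the Weyl group W(Γ) = Aut(Γ)/Stab(Γ) is isomorphic to the dihedral group of order 12 (the automorphism group of the root system G₂). -/

import Mathlib

/-- Degrees of `u₁, u₂, u₃` in the Cartan grading of the Cayley algebra. -/
def octDeg : Fin 3 → ℤ × ℤ := ![(1, 0), (0, 1), (-1, -1)]

/-- The Cartan `ℤ²`-grading on the Cayley algebra determined by a good basis. -/
def cartanOct {F : Type*} [Field F] {C : Type*} [NonAssocRing C] [Module F C]
    (e₁ e₂ : C) (u v : Fin 3 → C) : ℤ × ℤ → Submodule F C :=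
  fun g =>
    (if g = 0 then Submodule.span F {e₁, e₂} else ⊥) ⊔
    (⨆ i : Fin 3, if g = octDeg i then F ∙ u i else ⊥) ⊔
    (⨆ i : Fin 3, if g = -octDeg i then F ∙ v i else ⊥)

namespace WeylOctAux

def MA := Multiplicative (AddAut (ℤ × ℤ))
instance : Group MA := inferInstanceAs (Group (Multiplicative (AddAut (ℤ × ℤ))))
instance : EquivLike MA (ℤ × ℤ) (ℤ × ℤ) := inferInstanceAs (EquivLike (AddAut (ℤ × ℤ)) _ _)
instance : AddEquivClass MA (ℤ × ℤ) (ℤ × ℤ) :=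
  inferInstanceAs (AddEquivClass (AddAut (ℤ × ℤ)) _ _)
@[ext] lemma MA.ext {a b : MA} (h : ∀ p, a p = b p) : a = b := DFunLike.ext _ _ h
@[simp] lemma MA.mul_apply (a b : MA) (p : ℤ × ℤ) : (a * b) p = a (b p) := rfl
@[simp] lemma MA.one_apply (p : ℤ × ℤ) : (1 : MA) p = p := rfl
@[simp] lemma MA.apply_inv_self (a : MA) (p : ℤ × ℤ) : a (a⁻¹ p) = p :=
  AddEquiv.apply_symm_apply (show AddAut (ℤ × ℤ) from a) p
lemma MA.injective (a : MA) : Function.Injective a := EquivLike.injective a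

def RrotA : AddAut (ℤ × ℤ) :=
{ toFun := fun p => (p.1 - p.2, p.1)
  invFun := fun p => (p.2, p.2 - p.1)
  left_inv := by rintro ⟨a, b⟩; simp
  right_inv := by rintro ⟨a, b⟩; simp
  map_add' := by rintro ⟨a, b⟩ ⟨c, d⟩; simp [Prod.ext_iff]; ring }

def SrefA : AddAut (ℤ × ℤ) :=
{ toFun := fun p => (p.2, p.1)
  invFun := fun p => (p.2, p.1)
  left_inv := by rintro ⟨a, b⟩; simp
  right_inv := by rintro ⟨a, b⟩; simp
  map_add' := by rintro ⟨a, b⟩ ⟨c, d⟩; simp }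

def Rrot : MA := Multiplicative.ofAdd RrotA
def Sref : MA := Multiplicative.ofAdd SrefA

@[simp] lemma Rrot_apply (p : ℤ × ℤ) : Rrot p = (p.1 - p.2, p.1) := rfl
@[simp] lemma Sref_apply (p : ℤ × ℤ) : Sref p = (p.2, p.1) := rfl

lemma R6 : Rrot ^ 6 = 1 := by
  set_option linter.unnecessarySeqFocus false in
  ext p <;> simp [pow_succ, AddAut.mul_apply]

lemma Rpow_mod (n : ℕ) : Rrot ^ n = Rrot ^ (n % 6) := by
  conv_lhs => rw [← Nat.div_add_mod n 6]
  rw [pow_add, pow_mul, R6, one_pow, one_mul]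

lemma Rv (i j : ZMod 6) : Rrot ^ (i + j).val = Rrot ^ i.val * Rrot ^ j.val := by
  rw [ZMod.val_add, ← Rpow_mod, pow_add]

lemma RnS (n : ℕ) : Rrot ^ n * Sref = Sref * Rrot ^ (5 * n) := by
  induction n with
  | zero => simp
  | succ n ih =>
    have base : Rrot * Sref = Sref * Rrot ^ 5 := by
      ext p <;> simp [pow_succ, AddAut.mul_apply] <;> ring
    calc Rrot ^ (n + 1) * Sref = Rrot ^ n * (Rrot * Sref) := by rw [pow_succ, mul_assoc]
    _ = Rrot ^ n * Sref * Rrot ^ 5 := by rw [base, mul_assoc]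
    _ = Sref * (Rrot ^ (5 * n) * Rrot ^ 5) := by rw [ih, mul_assoc]
    _ = Sref * Rrot ^ (5 * (n + 1)) := by rw [← pow_add]; ring_nf

lemma SRz (i : ZMod 6) : Rrot ^ i.val * Sref = Sref * Rrot ^ (-i).val := by
  rw [RnS]
  congr 1
  have h : -i = (5 : ZMod 6) * i := by revert i; decide
  have h5 : ((5 : ZMod 6)).val = 5 := rfl
  rw [h, ZMod.val_mul, h5, ← Rpow_mod]

lemma S2 : Sref * Sref = 1 := by ext p <;> simp [AddAut.mul_apply]

def phi : DihedralGroup 6 →* MA :=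
  MonoidHom.mk'
    (fun d => match d with
      | .r i => Rrot ^ i.val
      | .sr i => Sref * Rrot ^ i.val)
    (by
      rintro (i | i) (j | j)
      · show Rrot ^ (i + j).val = _
        rw [Rv]
      · show Sref * Rrot ^ (j - i).val = Rrot ^ i.val * (Sref * Rrot ^ j.val)
        rw [← mul_assoc, SRz, mul_assoc, ← Rv]
        ring_nf
      · show Sref * Rrot ^ (i + j).val = Sref * Rrot ^ i.val * Rrot ^ j.val
        rw [mul_assoc, Rv]
      · show Rrot ^ (j - i).val = Sref * Rrot ^ i.val * (Sref * Rrot ^ j.val)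
        rw [mul_assoc, ← mul_assoc (Rrot ^ i.val), SRz, ← mul_assoc, ← mul_assoc, S2,
          one_mul, ← Rv]
        ring_nf)

lemma addaut_ext {μ ν : MA} (h1 : μ (1,0) = ν (1,0)) (h2 : μ (0,1) = ν (0,1)) :
    μ = ν := by
  refine DFunLike.ext _ _ fun p => ?_
  have hp : p = p.1 • ((1:ℤ),(0:ℤ)) + p.2 • ((0:ℤ),(1:ℤ)) := by
    simp [Prod.ext_iff]
  rw [hp, map_add, map_add, map_zsmul, map_zsmul, map_zsmul, map_zsmul, h1, h2]

lemma phi_inj : Function.Injective phi := by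
  refine (injective_iff_map_eq_one phi).mpr ?_
  rintro (i | i) h
  · suffices hi : i = 0 by rw [hi]; rfl
    fin_cases i
    · rfl
    · exact absurd (DFunLike.congr_fun h ((1:ℤ),(0:ℤ))) (by decide)
    · exact absurd (DFunLike.congr_fun h ((1:ℤ),(0:ℤ))) (by decide)
    · exact absurd (DFunLike.congr_fun h ((1:ℤ),(0:ℤ))) (by decide)
    · exact absurd (DFunLike.congr_fun h ((1:ℤ),(0:ℤ))) (by decide)
    · exact absurd (DFunLike.congr_fun h ((1:ℤ),(0:ℤ))) (by decide)
  · exfalso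
    fin_cases i
    · exact absurd (DFunLike.congr_fun h ((1:ℤ),(0:ℤ))) (by decide)
    · exact absurd (DFunLike.congr_fun h ((1:ℤ),(0:ℤ))) (by decide)
    · exact absurd (DFunLike.congr_fun h ((0:ℤ),(1:ℤ))) (by decide)
    · exact absurd (DFunLike.congr_fun h ((1:ℤ),(0:ℤ))) (by decide)
    · exact absurd (DFunLike.congr_fun h ((1:ℤ),(0:ℤ))) (by decide)
    · exact absurd (DFunLike.congr_fun h ((0:ℤ),(1:ℤ))) (by decide)

lemma cover (μ : MA)
    (hx : μ (1,0) = (1,0) ∨ μ (1,0) = (0,1) ∨ μ (1,0) = (1,1) ∨ μ (1,0) = (-1,0) ∨ μ (1,0) = (0,-1) ∨ μ (1,0) = (-1,-1))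
    (hy : μ (0,1) = (1,0) ∨ μ (0,1) = (0,1) ∨ μ (0,1) = (1,1) ∨ μ (0,1) = (-1,0) ∨ μ (0,1) = (0,-1) ∨ μ (0,1) = (-1,-1))
    (hxy : μ (1,0) + μ (0,1) = (1,0) ∨ μ (1,0) + μ (0,1) = (0,1) ∨ μ (1,0) + μ (0,1) = (1,1) ∨ μ (1,0) + μ (0,1) = (-1,0) ∨ μ (1,0) + μ (0,1) = (0,-1) ∨ μ (1,0) + μ (0,1) = (-1,-1)) :
    ∃ d : DihedralGroup 6, phi d = μ := by
  rcases hx with h1|h1|h1|h1|h1|h1 <;> rcases hy with h2|h2|h2|h2|h2|h2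
  · rw [h1, h2] at hxy; exact absurd hxy (by decide)
  · exact ⟨.r 0, addaut_ext (by rw [h1]; decide) (by rw [h2]; decide)⟩
  · rw [h1, h2] at hxy; exact absurd hxy (by decide)
  · rw [h1, h2] at hxy; exact absurd hxy (by decide)
  · rw [h1, h2] at hxy; exact absurd hxy (by decide)
  · exact ⟨.sr 2, addaut_ext (by rw [h1]; decide) (by rw [h2]; decide)⟩
  · exact ⟨.sr 0, addaut_ext (by rw [h1]; decide) (by rw [h2]; decide)⟩
  · rw [h1, h2] at hxy; exact absurd hxy (by decide)
  · rw [h1, h2] at hxy; exact absurd hxy (by decide)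
  · rw [h1, h2] at hxy; exact absurd hxy (by decide)
  · rw [h1, h2] at hxy; exact absurd hxy (by decide)
  · exact ⟨.r 2, addaut_ext (by rw [h1]; decide) (by rw [h2]; decide)⟩
  · rw [h1, h2] at hxy; exact absurd hxy (by decide)
  · rw [h1, h2] at hxy; exact absurd hxy (by decide)
  · rw [h1, h2] at hxy; exact absurd hxy (by decide)
  · exact ⟨.r 1, addaut_ext (by rw [h1]; decide) (by rw [h2]; decide)⟩
  · exact ⟨.sr 1, addaut_ext (by rw [h1]; decide) (by rw [h2]; decide)⟩
  · rw [h1, h2] at hxy; exact absurd hxy (by decide)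
  · rw [h1, h2] at hxy; exact absurd hxy (by decide)
  · rw [h1, h2] at hxy; exact absurd hxy (by decide)
  · exact ⟨.sr 5, addaut_ext (by rw [h1]; decide) (by rw [h2]; decide)⟩
  · rw [h1, h2] at hxy; exact absurd hxy (by decide)
  · exact ⟨.r 3, addaut_ext (by rw [h1]; decide) (by rw [h2]; decide)⟩
  · rw [h1, h2] at hxy; exact absurd hxy (by decide)
  · rw [h1, h2] at hxy; exact absurd hxy (by decide)
  · rw [h1, h2] at hxy; exact absurd hxy (by decide)
  · exact ⟨.r 5, addaut_ext (by rw [h1]; decide) (by rw [h2]; decide)⟩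
  · exact ⟨.sr 3, addaut_ext (by rw [h1]; decide) (by rw [h2]; decide)⟩
  · rw [h1, h2] at hxy; exact absurd hxy (by decide)
  · rw [h1, h2] at hxy; exact absurd hxy (by decide)
  · exact ⟨.r 4, addaut_ext (by rw [h1]; decide) (by rw [h2]; decide)⟩
  · exact ⟨.sr 4, addaut_ext (by rw [h1]; decide) (by rw [h2]; decide)⟩
  · rw [h1, h2] at hxy; exact absurd hxy (by decide)
  · rw [h1, h2] at hxy; exact absurd hxy (by decide)
  · rw [h1, h2] at hxy; exact absurd hxy (by decide)
  · rw [h1, h2] at hxy; exact absurd hxy (by decide)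

end WeylOctAux


set_option maxHeartbeats 2000000 in
/-- The Weyl group of the Cartan grading on the Cayley algebra, viewed as a subgroup of
`Aut(ℤ²)`, is isomorphic to the dihedral group of order 12 (the automorphism group of
the root system of type `G₂`). -/

theorem weyl_group_of_cartan_grading_on_octonions
    {F : Type*} [Field F] [IsAlgClosed F]
    {C : Type*} [NonAssocRing C] [Module F C] [SMulCommClass F C C] [IsScalarTower F C C]
    (e₁ e₂ : C) (u v : Fin 3 → C)
    (bC : Module.Basis (Fin 2 ⊕ Fin 3 ⊕ Fin 3) F C)
    (hb₁ : bC (Sum.inl 0) = e₁) (hb₂ : bC (Sum.inl 1) = e₂)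
    (hbu : ∀ i, bC (Sum.inr (Sum.inl i)) = u i)
    (hbv : ∀ i, bC (Sum.inr (Sum.inr i)) = v i)
    (he₁ : e₁ * e₁ = e₁) (he₂ : e₂ * e₂ = e₂)
    (he₁₂ : e₁ * e₂ = 0) (he₂₁ : e₂ * e₁ = 0)
    (h1u : ∀ i, e₁ * u i = u i) (hu2 : ∀ i, u i * e₂ = u i)
    (hu1 : ∀ i, u i * e₁ = 0) (h2u : ∀ i, e₂ * u i = 0)
    (h2v : ∀ i, e₂ * v i = v i) (hv1 : ∀ i, v i * e₁ = v i)
    (hv2 : ∀ i, v i * e₂ = 0) (h1v : ∀ i, e₁ * v i = 0)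
    (huu : ∀ i, u i * u (i + 1) = v (i + 2)) (huu' : ∀ i, u (i + 1) * u i = -(v (i + 2)))
    (hvv : ∀ i, v i * v (i + 1) = u (i + 2)) (hvv' : ∀ i, v (i + 1) * v i = -(u (i + 2)))
    (huv : ∀ i, u i * v i = -e₁) (hvu : ∀ i, v i * u i = -e₂)
    (huvz : ∀ i j, i ≠ j → u i * v j = 0) (hvuz : ∀ i j, i ≠ j → v i * u j = 0)
    (huuz : ∀ i, u i * u i = 0) (hvvz : ∀ i, v i * v i = 0) :
    ∃ W : Subgroup (Multiplicative (AddAut (ℤ × ℤ))),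
      (∀ μ : AddAut (ℤ × ℤ), Multiplicative.ofAdd μ ∈ W ↔
        ∃ ψ : C ≃ₗ[F] C, (∀ x y : C, ψ (x * y) = ψ x * ψ y) ∧
          ∀ g : ℤ × ℤ, Submodule.map (ψ : C →ₗ[F] C) (cartanOct e₁ e₂ u v g)
            = cartanOct e₁ e₂ u v (μ g)) ∧
      Nonempty (↥W ≃* DihedralGroup 6) := by
  classical
  open WeylOctAux in
  -- canonical expanded form of the grading
  have iSup3 : ∀ f : Fin 3 → Submodule F C, (⨆ i, f i) = f 0 ⊔ f 1 ⊔ f 2 := fun f =>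
    le_antisymm (iSup_le fun i => by
        fin_cases i
        exacts [le_sup_of_le_left le_sup_left, le_sup_of_le_left le_sup_right, le_sup_right])
      (sup_le (sup_le (le_iSup f 0) (le_iSup f 1)) (le_iSup f 2))
  have cartan_eq : ∀ g : ℤ × ℤ, cartanOct e₁ e₂ u v g =
      (if g = 0 then Submodule.span F {e₁, e₂} else ⊥) ⊔
      ((if g = (1,0) then F ∙ u 0 else ⊥) ⊔ (if g = (0,1) then F ∙ u 1 else ⊥) ⊔
        (if g = (-1,-1) then F ∙ u 2 else ⊥)) ⊔
      ((if g = (-1,0) then F ∙ v 0 else ⊥) ⊔ (if g = (0,-1) then F ∙ v 1 else ⊥) ⊔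
        (if g = (1,1) then F ∙ v 2 else ⊥)) := by
    intro g
    show (_ : Submodule F C) ⊔ _ ⊔ _ = _
    rw [iSup3, iSup3]
    norm_num [octDeg, Prod.ext_iff, Matrix.cons_val_two, Matrix.vecHead, Matrix.vecTail]
  have spanNeg : ∀ x : C, Submodule.span F {-x} = Submodule.span F {x} := fun x => by
    rw [← Set.neg_singleton, Submodule.span_neg]
  -- concrete product table
  have tuu01 : u 0 * u 1 = v 2 := by simpa using huu 0
  have tuu12 : u 1 * u 2 = v 0 := by simpa using huu 1
  have tuu20 : u 2 * u 0 = v 1 := by simpa using huu 2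
  have tuu10 : u 1 * u 0 = -v 2 := by simpa using huu' 0
  have tuu21 : u 2 * u 1 = -v 0 := by simpa using huu' 1
  have tuu02 : u 0 * u 2 = -v 1 := by simpa using huu' 2
  have tvv01 : v 0 * v 1 = u 2 := by simpa using hvv 0
  have tvv12 : v 1 * v 2 = u 0 := by simpa using hvv 1
  have tvv20 : v 2 * v 0 = u 1 := by simpa using hvv 2
  have tvv10 : v 1 * v 0 = -u 2 := by simpa using hvv' 0
  have tvv21 : v 2 * v 1 = -u 0 := by simpa using hvv' 1
  have tvv02 : v 0 * v 2 = -u 1 := by simpa using hvv' 2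
  -- the rotation automorphism ψR
  obtain ⟨ψR, hRe₁, hRe₂, hRuv, hRvu⟩ :
      ∃ ψ : C ≃ₗ[F] C, ψ e₁ = e₂ ∧ ψ e₂ = e₁ ∧
        (∀ i, ψ (u i) = v (i + 2)) ∧ (∀ i, ψ (v i) = u (i + 2)) := by
    refine ⟨bC.equiv bC
      ⟨fun j => match j with
        | .inl a => .inl (a + 1)
        | .inr (.inl i) => .inr (.inr (i + 2))
        | .inr (.inr i) => .inr (.inl (i + 2)),
       fun j => match j with
        | .inl a => .inl (a + 1)
        | .inr (.inl i) => .inr (.inr (i + 1))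
        | .inr (.inr i) => .inr (.inl (i + 1)),
       by decide, by decide⟩, ?_, ?_, ?_, ?_⟩
    · rw [← hb₁, Module.Basis.equiv_apply]
      exact (congrArg bC (by decide : _ = Sum.inl (1 : Fin 2))).trans hb₂
    · rw [← hb₂, Module.Basis.equiv_apply]
      exact (congrArg bC (by decide : _ = Sum.inl (0 : Fin 2))).trans hb₁
    · intro i
      rw [← hbu i, Module.Basis.equiv_apply]
      exact hbv (i + 2)
    · intro i
      rw [← hbv i, Module.Basis.equiv_apply]
      exact hbu (i + 2)
  have hRu0 : ψR (u 0) = v 2 := by simpa using hRuv 0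
  have hRu1 : ψR (u 1) = v 0 := by simpa using hRuv 1
  have hRu2 : ψR (u 2) = v 1 := by simpa using hRuv 2
  have hRv0 : ψR (v 0) = u 2 := by simpa using hRvu 0
  have hRv1 : ψR (v 1) = u 0 := by simpa using hRvu 1
  have hRv2 : ψR (v 2) = u 1 := by simpa using hRvu 2
  -- the reflection automorphism ψS
  obtain ⟨ψS, hSe₁, hSe₂, hSu0, hSu1, hSu2, hSv0, hSv1, hSv2⟩ :
      ∃ ψ : C ≃ₗ[F] C, ψ e₁ = e₁ ∧ ψ e₂ = e₂ ∧
        ψ (u 0) = u 1 ∧ ψ (u 1) = u 0 ∧ ψ (u 2) = -u 2 ∧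
        ψ (v 0) = v 1 ∧ ψ (v 1) = v 0 ∧ ψ (v 2) = -v 2 := by
    set t : Fin 2 ⊕ Fin 3 ⊕ Fin 3 → C :=
      Sum.elim (fun a => bC (Sum.inl a)) (Sum.elim ![u 1, u 0, -u 2] ![v 1, v 0, -v 2]) with ht
    have hff : (bC.constr (M' := C) F t) ∘ₗ (bC.constr (M' := C) F t) = LinearMap.id := by
      refine bC.ext fun j => ?_
      rcases j with a | i | i
      · simp [ht, Module.Basis.constr_basis]
      · fin_cases i <;>
          simp [ht, Module.Basis.constr_basis, ← hbu, map_neg]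
      · fin_cases i <;>
          simp [ht, Module.Basis.constr_basis, ← hbv, map_neg]
    refine ⟨LinearEquiv.ofLinear (bC.constr (M' := C) F t) (bC.constr (M' := C) F t) hff hff,
      ?_, ?_, ?_, ?_, ?_, ?_, ?_, ?_⟩ <;>
      simp only [LinearEquiv.ofLinear_apply]
    · rw [← hb₁, Module.Basis.constr_basis]; simp [ht, hb₁]
    · rw [← hb₂, Module.Basis.constr_basis]; simp [ht, hb₂]
    · rw [← hbu 0, Module.Basis.constr_basis]; simp [ht]
    · rw [← hbu 1, Module.Basis.constr_basis]; simp [ht]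
    · rw [← hbu 2, Module.Basis.constr_basis]; simp [ht, hbu]
    · rw [← hbv 0, Module.Basis.constr_basis]; simp [ht]
    · rw [← hbv 1, Module.Basis.constr_basis]; simp [ht]
    · rw [← hbv 2, Module.Basis.constr_basis]; simp [ht, hbv]
  -- multiplicativity
  have bilin : ∀ ψ : C ≃ₗ[F] C,
      (∀ j k : Fin 2 ⊕ Fin 3 ⊕ Fin 3, ψ (bC j * bC k) = ψ (bC j) * ψ (bC k)) →
      ∀ x y : C, ψ (x * y) = ψ x * ψ y := by
    intro ψ key x y
    have hbil : (LinearMap.mul F C).compr₂ (ψ : C →ₗ[F] C) =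
        ((LinearMap.mul F C).compl₂ (ψ : C →ₗ[F] C)).comp (ψ : C →ₗ[F] C) := by
      refine bC.ext fun j => bC.ext fun k => ?_
      simpa only [LinearMap.compr₂_apply, LinearMap.mul_apply', LinearMap.compl₂_apply,
        LinearMap.comp_apply, LinearEquiv.coe_coe] using key j k
    have := LinearMap.congr_fun (LinearMap.congr_fun hbil x) y
    simpa only [LinearMap.compr₂_apply, LinearMap.mul_apply', LinearMap.compl₂_apply,
      LinearMap.comp_apply, LinearEquiv.coe_coe] using this
  have hRmul : ∀ x y : C, ψR (x * y) = ψR x * ψR y := by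
    refine bilin ψR ?_
    rintro (a | i | i) (b | l | l) <;>
      first
      | (fin_cases a <;> fin_cases b <;>
          simp [hb₁, hb₂, hbu, hbv, he₁, he₂, he₁₂, he₂₁, h1u, hu2, hu1, h2u, h2v, hv1, hv2,
            h1v, huv, hvu, huvz, hvuz, huuz, hvvz, tuu01, tuu12, tuu20, tuu10, tuu21, tuu02,
            tvv01, tvv12, tvv20, tvv10, tvv21, tvv02, hRe₁, hRe₂, hRu0, hRu1, hRu2, hRv0,
            hRv1, hRv2, map_neg, neg_mul, mul_neg, neg_neg])
      | (fin_cases a <;> fin_cases l <;>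
          simp [hb₁, hb₂, hbu, hbv, he₁, he₂, he₁₂, he₂₁, h1u, hu2, hu1, h2u, h2v, hv1, hv2,
            h1v, huv, hvu, huvz, hvuz, huuz, hvvz, tuu01, tuu12, tuu20, tuu10, tuu21, tuu02,
            tvv01, tvv12, tvv20, tvv10, tvv21, tvv02, hRe₁, hRe₂, hRu0, hRu1, hRu2, hRv0,
            hRv1, hRv2, map_neg, neg_mul, mul_neg, neg_neg])
      | (fin_cases i <;> fin_cases b <;>
          simp [hb₁, hb₂, hbu, hbv, he₁, he₂, he₁₂, he₂₁, h1u, hu2, hu1, h2u, h2v, hv1, hv2,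
            h1v, huv, hvu, huvz, hvuz, huuz, hvvz, tuu01, tuu12, tuu20, tuu10, tuu21, tuu02,
            tvv01, tvv12, tvv20, tvv10, tvv21, tvv02, hRe₁, hRe₂, hRu0, hRu1, hRu2, hRv0,
            hRv1, hRv2, map_neg, neg_mul, mul_neg, neg_neg])
      | (fin_cases i <;> fin_cases l <;>
          simp [hb₁, hb₂, hbu, hbv, he₁, he₂, he₁₂, he₂₁, h1u, hu2, hu1, h2u, h2v, hv1, hv2,
            h1v, huv, hvu, huvz, hvuz, huuz, hvvz, tuu01, tuu12, tuu20, tuu10, tuu21, tuu02,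
            tvv01, tvv12, tvv20, tvv10, tvv21, tvv02, hRe₁, hRe₂, hRu0, hRu1, hRu2, hRv0,
            hRv1, hRv2, map_neg, neg_mul, mul_neg, neg_neg])
  have hSmul : ∀ x y : C, ψS (x * y) = ψS x * ψS y := by
    refine bilin ψS ?_
    rintro (a | i | i) (b | l | l) <;>
      first
      | (fin_cases a <;> fin_cases b <;>
          simp [hb₁, hb₂, hbu, hbv, he₁, he₂, he₁₂, he₂₁, h1u, hu2, hu1, h2u, h2v, hv1, hv2,
            h1v, huv, hvu, huvz, hvuz, huuz, hvvz, tuu01, tuu12, tuu20, tuu10, tuu21, tuu02,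
            tvv01, tvv12, tvv20, tvv10, tvv21, tvv02, hSe₁, hSe₂, hSu0, hSu1, hSu2, hSv0,
            hSv1, hSv2, map_neg, neg_mul, mul_neg, neg_neg])
      | (fin_cases a <;> fin_cases l <;>
          simp [hb₁, hb₂, hbu, hbv, he₁, he₂, he₁₂, he₂₁, h1u, hu2, hu1, h2u, h2v, hv1, hv2,
            h1v, huv, hvu, huvz, hvuz, huuz, hvvz, tuu01, tuu12, tuu20, tuu10, tuu21, tuu02,
            tvv01, tvv12, tvv20, tvv10, tvv21, tvv02, hSe₁, hSe₂, hSu0, hSu1, hSu2, hSv0,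
            hSv1, hSv2, map_neg, neg_mul, mul_neg, neg_neg])
      | (fin_cases i <;> fin_cases b <;>
          simp [hb₁, hb₂, hbu, hbv, he₁, he₂, he₁₂, he₂₁, h1u, hu2, hu1, h2u, h2v, hv1, hv2,
            h1v, huv, hvu, huvz, hvuz, huuz, hvvz, tuu01, tuu12, tuu20, tuu10, tuu21, tuu02,
            tvv01, tvv12, tvv20, tvv10, tvv21, tvv02, hSe₁, hSe₂, hSu0, hSu1, hSu2, hSv0,
            hSv1, hSv2, map_neg, neg_mul, mul_neg, neg_neg])
      | (fin_cases i <;> fin_cases l <;>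
          simp [hb₁, hb₂, hbu, hbv, he₁, he₂, he₁₂, he₂₁, h1u, hu2, hu1, h2u, h2v, hv1, hv2,
            h1v, huv, hvu, huvz, hvuz, huuz, hvvz, tuu01, tuu12, tuu20, tuu10, tuu21, tuu02,
            tvv01, tvv12, tvv20, tvv10, tvv21, tvv02, hSe₁, hSe₂, hSu0, hSu1, hSu2, hSv0,
            hSv1, hSv2, map_neg, neg_mul, mul_neg, neg_neg])
  -- mapping of components
  have hRmap : ∀ g : ℤ × ℤ, Submodule.map (ψR : C →ₗ[F] C) (cartanOct e₁ e₂ u v g)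
      = cartanOct e₁ e₂ u v (Rrot g) := by
    intro g
    rw [cartan_eq (Rrot g), cartan_eq g]
    simp only [Submodule.map_sup, apply_ite (Submodule.map (ψR : C →ₗ[F] C)),
      Submodule.map_bot, Submodule.map_span, Set.image_insert_eq, Set.image_singleton,
      LinearEquiv.coe_coe, hRe₁, hRe₂, hRu0, hRu1, hRu2, hRv0, hRv1, hRv2, spanNeg]
    simp only [Rrot.injective.eq_iff' (show Rrot 0 = (0 : ℤ × ℤ) from by decide),
      Rrot.injective.eq_iff' (show Rrot ((0:ℤ),(-1:ℤ)) = ((1:ℤ),(0:ℤ)) from by decide),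
      Rrot.injective.eq_iff' (show Rrot ((1:ℤ),(1:ℤ)) = ((0:ℤ),(1:ℤ)) from by decide),
      Rrot.injective.eq_iff' (show Rrot ((-1:ℤ),(0:ℤ)) = ((-1:ℤ),(-1:ℤ)) from by decide),
      Rrot.injective.eq_iff' (show Rrot ((0:ℤ),(1:ℤ)) = ((-1:ℤ),(0:ℤ)) from by decide),
      Rrot.injective.eq_iff' (show Rrot ((-1:ℤ),(-1:ℤ)) = ((0:ℤ),(-1:ℤ)) from by decide),
      Rrot.injective.eq_iff' (show Rrot ((1:ℤ),(0:ℤ)) = ((1:ℤ),(1:ℤ)) from by decide)]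
    rw [Set.pair_comm e₂ e₁]
    ac_rfl
  have hSmap : ∀ g : ℤ × ℤ, Submodule.map (ψS : C →ₗ[F] C) (cartanOct e₁ e₂ u v g)
      = cartanOct e₁ e₂ u v (Sref g) := by
    intro g
    rw [cartan_eq (Sref g), cartan_eq g]
    simp only [Submodule.map_sup, apply_ite (Submodule.map (ψS : C →ₗ[F] C)),
      Submodule.map_bot, Submodule.map_span, Set.image_insert_eq, Set.image_singleton,
      LinearEquiv.coe_coe, hSe₁, hSe₂, hSu0, hSu1, hSu2, hSv0, hSv1, hSv2, spanNeg]
    simp only [Sref.injective.eq_iff' (show Sref 0 = (0 : ℤ × ℤ) from by decide),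
      Sref.injective.eq_iff' (show Sref ((0:ℤ),(1:ℤ)) = ((1:ℤ),(0:ℤ)) from by decide),
      Sref.injective.eq_iff' (show Sref ((1:ℤ),(0:ℤ)) = ((0:ℤ),(1:ℤ)) from by decide),
      Sref.injective.eq_iff' (show Sref ((-1:ℤ),(-1:ℤ)) = ((-1:ℤ),(-1:ℤ)) from by decide),
      Sref.injective.eq_iff' (show Sref ((0:ℤ),(-1:ℤ)) = ((-1:ℤ),(0:ℤ)) from by decide),
      Sref.injective.eq_iff' (show Sref ((-1:ℤ),(0:ℤ)) = ((0:ℤ),(-1:ℤ)) from by decide),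
      Sref.injective.eq_iff' (show Sref ((1:ℤ),(1:ℤ)) = ((1:ℤ),(1:ℤ)) from by decide)]
    ac_rfl
  -- closure properties
  have Pone : ∃ ψ : C ≃ₗ[F] C, (∀ x y : C, ψ (x * y) = ψ x * ψ y) ∧
      ∀ g : ℤ × ℤ, Submodule.map (ψ : C →ₗ[F] C) (cartanOct e₁ e₂ u v g)
        = cartanOct e₁ e₂ u v ((1 : WeylOctAux.MA) g) :=
    ⟨LinearEquiv.refl F C, fun x y => rfl, fun g => by simp [Submodule.map_id]⟩
  have Pmul : ∀ a b : WeylOctAux.MA,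
      (∃ ψ : C ≃ₗ[F] C, (∀ x y : C, ψ (x * y) = ψ x * ψ y) ∧
      ∀ g : ℤ × ℤ, Submodule.map (ψ : C →ₗ[F] C) (cartanOct e₁ e₂ u v g)
        = cartanOct e₁ e₂ u v (a g)) →
      (∃ ψ : C ≃ₗ[F] C, (∀ x y : C, ψ (x * y) = ψ x * ψ y) ∧
      ∀ g : ℤ × ℤ, Submodule.map (ψ : C →ₗ[F] C) (cartanOct e₁ e₂ u v g)
        = cartanOct e₁ e₂ u v (b g)) →
      (∃ ψ : C ≃ₗ[F] C, (∀ x y : C, ψ (x * y) = ψ x * ψ y) ∧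
      ∀ g : ℤ × ℤ, Submodule.map (ψ : C →ₗ[F] C) (cartanOct e₁ e₂ u v g)
        = cartanOct e₁ e₂ u v ((a * b) g)) := by
    rintro a b ⟨ψ, hm, hg⟩ ⟨χ, im, ig⟩
    refine ⟨χ.trans ψ, fun x y => by simp [LinearEquiv.trans_apply, im, hm], fun g => ?_⟩
    rw [LinearEquiv.coe_trans, Submodule.map_comp, ig, hg]
    rfl
  have Pinv : ∀ a : WeylOctAux.MA,
      (∃ ψ : C ≃ₗ[F] C, (∀ x y : C, ψ (x * y) = ψ x * ψ y) ∧
      ∀ g : ℤ × ℤ, Submodule.map (ψ : C →ₗ[F] C) (cartanOct e₁ e₂ u v g)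
        = cartanOct e₁ e₂ u v (a g)) →
      (∃ ψ : C ≃ₗ[F] C, (∀ x y : C, ψ (x * y) = ψ x * ψ y) ∧
      ∀ g : ℤ × ℤ, Submodule.map (ψ : C →ₗ[F] C) (cartanOct e₁ e₂ u v g)
        = cartanOct e₁ e₂ u v (a⁻¹ g)) := by
    rintro a ⟨ψ, hm, hg⟩
    have hcomp : ∀ p : Submodule F C,
        Submodule.map (ψ.symm : C →ₗ[F] C) (Submodule.map (ψ : C →ₗ[F] C) p) = p := fun p => by
      rw [← Submodule.map_comp]
      simp
    refine ⟨ψ.symm, fun x y => ?_, fun g => ?_⟩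
    · apply ψ.injective
      rw [hm, ψ.apply_symm_apply, ψ.apply_symm_apply, ψ.apply_symm_apply]
    · have h2 := hg (a⁻¹ g)
      have h3 : a (a⁻¹ g) = g := by simp
      rw [h3] at h2
      rw [← h2, hcomp]
  let Wgrp : Subgroup WeylOctAux.MA :=
    { carrier := {μ : WeylOctAux.MA | ∃ ψ : C ≃ₗ[F] C, (∀ x y : C, ψ (x * y) = ψ x * ψ y) ∧
      ∀ g : ℤ × ℤ, Submodule.map (ψ : C →ₗ[F] C) (cartanOct e₁ e₂ u v g)
        = cartanOct e₁ e₂ u v (μ g)},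
      one_mem' := Pone,
      mul_mem' := fun {a b} ha hb => Pmul a b ha hb,
      inv_mem' := fun {a} ha => Pinv a ha }
  have hRmem : Rrot ∈ Wgrp := ⟨ψR, hRmul, hRmap⟩
  have hSmem : Sref ∈ Wgrp := ⟨ψS, hSmul, hSmap⟩
  -- support facts
  have hsupport : ∀ h : ℤ × ℤ, cartanOct (F := F) e₁ e₂ u v h ≠ ⊥ →
      (h = 0 ∨ h = (1,0) ∨ h = (0,1) ∨ h = (1,1) ∨ h = (-1,0) ∨ h = (0,-1) ∨ h = (-1,-1)) := by
    intro h hne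
    by_contra hcon
    push_neg at hcon
    obtain ⟨c0, c1, c2, c3, c4, c5, c6⟩ := hcon
    apply hne
    rw [cartan_eq]
    rw [if_neg c0, if_neg c1, if_neg c2, if_neg c6, if_neg c4, if_neg c5, if_neg c3]
    simp
  have mapne : ∀ (ψ : C ≃ₗ[F] C) (x : C), x ≠ 0 →
      Submodule.map (ψ : C →ₗ[F] C) (F ∙ x) ≠ ⊥ := by
    intro ψ x hx hb
    have hmem : ψ x ∈ Submodule.map (ψ : C →ₗ[F] C) (F ∙ x) :=
      Submodule.mem_map_of_mem (Submodule.mem_span_singleton_self x)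
    rw [hb, Submodule.mem_bot] at hmem
    exact hx (by simpa using hmem)
  have hA10 : cartanOct e₁ e₂ u v (1,0) = F ∙ u 0 := by
    rw [cartan_eq]
    norm_num [Prod.ext_iff]
  have hA01 : cartanOct e₁ e₂ u v (0,1) = F ∙ u 1 := by
    rw [cartan_eq]
    norm_num [Prod.ext_iff]
  have hA11 : cartanOct e₁ e₂ u v (1,1) = F ∙ v 2 := by
    rw [cartan_eq]
    norm_num [Prod.ext_iff]
  have hu0ne : u 0 ≠ 0 := by rw [← hbu 0]; exact bC.ne_zero _
  have hu1ne : u 1 ≠ 0 := by rw [← hbu 1]; exact bC.ne_zero _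
  have hv2ne : v 2 ≠ 0 := by rw [← hbv 2]; exact bC.ne_zero _
  refine ⟨Wgrp, fun μ => Iff.rfl, ?_⟩
  suffices hrange : Wgrp = WeylOctAux.phi.range by
    exact ⟨(MulEquiv.subgroupCongr hrange).trans (MonoidHom.ofInjective WeylOctAux.phi_inj).symm⟩
  ext μ
  constructor
  · intro hμ
    obtain ⟨ψ, hm, hg⟩ : ∃ ψ : C ≃ₗ[F] C, (∀ x y : C, ψ (x * y) = ψ x * ψ y) ∧
      ∀ g : ℤ × ℤ, Submodule.map (ψ : C →ₗ[F] C) (cartanOct e₁ e₂ u v g)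
        = cartanOct e₁ e₂ u v (μ g) := hμ
    have step : ∀ p : ℤ × ℤ, p ≠ 0 → cartanOct (F := F) e₁ e₂ u v p ≠ ⊥ →
        (μ p = (1,0) ∨ μ p = (0,1) ∨ μ p = (1,1) ∨ μ p = (-1,0) ∨ μ p = (0,-1) ∨
          μ p = (-1,-1)) := by
      intro p hp hpb
      have hnb : cartanOct (F := F) e₁ e₂ u v (μ p) ≠ ⊥ := by
        rw [← hg p]
        intro hb
        apply hpb
        have := congrArg (Submodule.map (ψ.symm : C →ₗ[F] C)) hb
        rwa [← Submodule.map_comp, Submodule.map_bot,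
          (by ext x; simp : (ψ.symm : C →ₗ[F] C).comp (ψ : C →ₗ[F] C) = LinearMap.id),
          Submodule.map_id] at this
      rcases hsupport _ hnb with h | h
      · exact absurd (μ.injective (h.trans (map_zero μ).symm)) hp
      · exact h
    have m10 := step (1,0) (by decide) (by rw [hA10]; exact fun hb => mapne (LinearEquiv.refl F C) (u 0) hu0ne (by simpa [Submodule.map_id] using hb))
    have m01 := step (0,1) (by decide) (by rw [hA01]; exact fun hb => mapne (LinearEquiv.refl F C) (u 1) hu1ne (by simpa [Submodule.map_id] using hb))
    have m11 := step (1,1) (by decide) (by rw [hA11]; exact fun hb => mapne (LinearEquiv.refl F C) (v 2) hv2ne (by simpa [Submodule.map_id] using hb))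
    have hsum : μ (1,0) + μ (0,1) = μ (1,1) := by
      rw [← map_add]
      norm_num
    have mxy : μ (1,0) + μ (0,1) = (1,0) ∨ μ (1,0) + μ (0,1) = (0,1) ∨
        μ (1,0) + μ (0,1) = (1,1) ∨ μ (1,0) + μ (0,1) = (-1,0) ∨
        μ (1,0) + μ (0,1) = (0,-1) ∨ μ (1,0) + μ (0,1) = (-1,-1) := by
      rw [hsum]; exact m11
    exact WeylOctAux.cover μ m10 m01 mxy
  · rintro ⟨d, rfl⟩
    rcases d with i | i
    · show WeylOctAux.phi (DihedralGroup.r i) ∈ Wgrp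
      have hphi : WeylOctAux.phi (DihedralGroup.r i) = Rrot ^ i.val := rfl
      rw [hphi]
      exact pow_mem hRmem i.val
    · show WeylOctAux.phi (DihedralGroup.sr i) ∈ Wgrp
      have hphi : WeylOctAux.phi (DihedralGroup.sr i) = Sref * Rrot ^ i.val := rfl
      rw [hphi]
      exact mul_mem hSmem (pow_mem hRmem i.val)
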